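/- Let n ≥ 2, let A be a linear subspace of ℝ^n of dimension d ∈ [1, n−1], let e ∈ [1, n−1] and let j ∈ [1, min(d,e) − g(d,e,n)]. Then A is (e,j)-irrational if and only if the orthogonal complement A^⊥ (with respect to the standard inner product on ℝ^n) is (n−e, j)-irrational. -/

import Mathlib

noncomputable section

/-- A subspace of `ℝ^n` is rational if it is spanned by vectors with rational coordinates. -/
def IsRationalSubspace {n : ℕ} (B : Submodule ℝ (EuclideanSpace ℝ (Fin n))) : Prop :=
  ∃ s : Set (EuclideanSpace ℝ (Fin n)),
    (∀ v ∈ s, ∀ i, ∃ q : ℚ, v i = (q : ℝ)) ∧ Submodule.span ℝ s = B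

/-- `A` is `(e, j)`-irrational: every rational subspace `B` of dimension `e` satisfies
`dim (A ∩ B) < j + max 0 (dim A + e - n)` (here `dim A + e - n` is truncated
subtraction, which equals `max 0 (dim A + e - n)`). -/
def IsIrrational {n : ℕ} (A : Submodule ℝ (EuclideanSpace ℝ (Fin n))) (e j : ℕ) : Prop :=
  ∀ B : Submodule ℝ (EuclideanSpace ℝ (Fin n)),
    IsRationalSubspace B → Module.finrank ℝ B = e →
      Module.finrank ℝ ↥(A ⊓ B) < j + (Module.finrank ℝ A + e - n)

namespace OrthIrrAux

open Module Matrix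

/-- Coordinatewise rational-to-real map. -/
def φ {n : ℕ} (q : Fin n → ℚ) : EuclideanSpace ℝ (Fin n) := WithLp.toLp 2 (fun i => (q i : ℝ))

theorem crux {n : ℕ} {ι : Type} [Fintype ι] [DecidableEq ι] (w : ι → Fin n → ℚ)
    (h : LinearIndependent ℚ w) : LinearIndependent ℝ (fun i => φ (w i)) := by
  rw [Fintype.linearIndependent_iff] at h ⊢
  set N : Matrix (Fin n) ι ℚ := Matrix.of fun a i => w i a with hN
  have hker : LinearMap.ker N.mulVecLin = ⊥ := by
    rw [LinearMap.ker_eq_bot']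
    intro c hc
    funext i
    refine h c ?_ i
    funext a
    have := congrFun hc a
    simpa [Matrix.mulVecLin_apply, Matrix.mulVec, dotProduct, hN, mul_comm,
      Finset.sum_apply] using this
  have hker2 : LinearMap.ker (Nᵀ * N).mulVecLin = ⊥ := by
    rw [Matrix.ker_mulVecLin_transpose_mul_self]; exact hker
  have hunit : IsUnit (Nᵀ * N) := by
    rw [← Matrix.mulVec_injective_iff_isUnit]
    have := LinearMap.ker_eq_bot.mp hker2
    exact this
  have hdet : (Nᵀ * N).det ≠ 0 := by
    have := (Matrix.isUnit_iff_isUnit_det _).mp hunit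
    exact IsUnit.ne_zero this
  set M : Matrix (Fin n) ι ℝ := N.map (Rat.castHom ℝ) with hM
  have hunitR : IsUnit (Mᵀ * M) := by
    have h1 : Mᵀ * M = ((Nᵀ * N).map (Rat.castHom ℝ)) := by
      rw [Matrix.map_mul]; rfl
    have hd2 : ((Nᵀ * N).map (Rat.castHom ℝ)).det = (((Nᵀ * N).det : ℚ) : ℝ) :=
      (RingHom.map_det (Rat.castHom ℝ) (Nᵀ * N)).symm
    rw [h1, Matrix.isUnit_iff_isUnit_det, hd2]
    simp [isUnit_iff_ne_zero, hdet]
  intro c hc i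
  have hMc : M.mulVec c = 0 := by
    funext a
    have := congrArg (fun v : EuclideanSpace ℝ (Fin n) => v a) hc
    simp only at this
    have h2 : (∑ x : ι, c x • φ (w x)) a = ∑ x : ι, c x * (w x a : ℝ) := by
      have h3 : (∑ x : ι, c x • φ (w x)) a = ∑ x : ι, (c x • φ (w x)) a :=
        map_sum (AddMonoidHom.mk' (fun v : EuclideanSpace ℝ (Fin n) => v a) (fun u v => rfl))
          (fun x => c x • φ (w x)) Finset.univ
      rw [h3]
      exact Finset.sum_congr rfl fun x _ => by simp [φ, PiLp.smul_apply]
    rw [h2] at this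
    simpa [Matrix.mulVec, dotProduct, hM, hN, mul_comm] using this
  have hinj := Matrix.mulVec_injective_iff_isUnit.mpr hunitR
  have h0 : (Mᵀ * M).mulVec c = (Mᵀ * M).mulVec 0 := by
    rw [← Matrix.mulVec_mulVec, hMc, Matrix.mulVec_zero, Matrix.mulVec_zero]
  exact congrFun (hinj h0) i

/-- The orthogonal complement of a rational subspace is rational. -/
theorem isRat_orth {n : ℕ} (B : Submodule ℝ (EuclideanSpace ℝ (Fin n)))
    (hB : IsRationalSubspace B) : IsRationalSubspace Bᗮ := by
  classical
  obtain ⟨s, hs, hspan⟩ := hB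
  obtain ⟨t, hts, htspan, hti⟩ := exists_linearIndependent ℝ s
  have htfin : t.Finite := hti.setFinite
  haveI : Fintype t := htfin.fintype
  -- rational coordinates for vectors of t
  have hrat : ∀ v : t, ∀ i, ∃ q : ℚ, (v : EuclideanSpace ℝ (Fin n)) i = (q : ℝ) :=
    fun v i => hs v (hts v.2) i
  let w : t → Fin n → ℚ := fun v a => (hrat v a).choose
  have hw : ∀ v : t, ∀ a, ((v : EuclideanSpace ℝ (Fin n)) a) = ((w v a : ℚ) : ℝ) :=
    fun v a => (hrat v a).choose_spec
  -- the rational linear map whose kernel consists of rational points of Bᗮ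
  let ψ : (Fin n → ℚ) →ₗ[ℚ] (t → ℚ) :=
    { toFun := fun q v => ∑ a, w v a * q a
      map_add' := by
        intro x y; funext v
        simp [mul_add, Finset.sum_add_distrib]
      map_smul' := by
        intro c x; funext v
        simp [Finset.mul_sum, mul_left_comm] }
  have hcard : Fintype.card t = Module.finrank ℝ B := by
    rw [← hspan, ← htspan]
    rw [finrank_span_set_eq_card hti]
    simp [Set.toFinset_card]
  set m := Module.finrank ℚ (LinearMap.ker ψ) with hm
  have hrn : Module.finrank ℚ (LinearMap.range ψ) + m = n := by
    rw [hm, LinearMap.finrank_range_add_finrank_ker]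
    simp
  have hrange : Module.finrank ℚ (LinearMap.range ψ) ≤ Module.finrank ℝ B := by
    calc Module.finrank ℚ (LinearMap.range ψ) ≤ Module.finrank ℚ (t → ℚ) :=
          Submodule.finrank_le _
      _ = Fintype.card t := by simp
      _ = Module.finrank ℝ B := hcard
  -- a basis of the kernel
  let bu := Module.finBasis ℚ (LinearMap.ker ψ)
  let u : Fin m → (Fin n → ℚ) := fun i => (bu i : Fin n → ℚ)
  have hu : LinearIndependent ℚ u :=
    bu.linearIndependent.map' (LinearMap.ker ψ).subtype (Submodule.ker_subtype _)
  have huker : ∀ i, ψ (u i) = 0 := fun i => (bu i).2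
  -- the candidate rational spanning family of Bᗮ
  let K : Set (EuclideanSpace ℝ (Fin n)) := Set.range (fun i => φ (u i))
  have hKrat : ∀ v ∈ K, ∀ i, ∃ q : ℚ, v i = (q : ℝ) := by
    rintro v ⟨i, rfl⟩ a
    exact ⟨u i a, rfl⟩
  have hKmem : ∀ i : Fin m, φ (u i) ∈ Bᗮ := by
    intro i
    rw [Submodule.mem_orthogonal]
    intro y hy
    rw [← hspan] at hy
    rw [← htspan] at hy
    induction hy using Submodule.span_induction with
    | mem y hyt =>
        have : (inner ℝ y (φ (u i)) : ℝ) = ∑ a, y a * (u i a : ℝ) := by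
          rw [PiLp.inner_apply]
          exact Finset.sum_congr rfl fun a _ => by simp [φ, mul_comm]
        rw [this]
        have h4 : ∑ a, y a * ((u i a : ℚ) : ℝ) = ((∑ a, w ⟨y, hyt⟩ a * u i a : ℚ) : ℝ) := by
          push_cast
          exact Finset.sum_congr rfl fun a _ =>
            congrArg (fun r => r * ((u i a : ℚ) : ℝ)) (hw ⟨y, hyt⟩ a)
        rw [h4]
        have := congrFun (huker i) ⟨y, hyt⟩
        simp only [ψ, LinearMap.coe_mk, AddHom.coe_mk, Pi.zero_apply] at this
        rw [this]
        simp
    | zero => simp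
    | add y z _ _ hy hz => rw [inner_add_left, hy, hz, add_zero]
    | smul c y _ hy => rw [real_inner_smul_left, hy, mul_zero]
  have hKle : Submodule.span ℝ K ≤ Bᗮ := by
    rw [Submodule.span_le]
    rintro v ⟨i, rfl⟩
    exact hKmem i
  have hKind : LinearIndependent ℝ (fun i => φ (u i)) := crux u hu
  have hKdim : Module.finrank ℝ (Submodule.span ℝ K) = m := by
    rw [finrank_span_eq_card hKind]
    simp
  have horth : Module.finrank ℝ B + Module.finrank ℝ Bᗮ = n := by
    have := Submodule.finrank_add_finrank_orthogonal B
    simpa using this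
  have : Submodule.span ℝ K = Bᗮ := by
    apply Submodule.eq_of_le_of_finrank_le hKle
    omega
  exact ⟨K, hKrat, this⟩

theorem dim_eq {n : ℕ} (A B : Submodule ℝ (EuclideanSpace ℝ (Fin n))) :
    Module.finrank ℝ ↥(Aᗮ ⊓ Bᗮ) + (Module.finrank ℝ A + Module.finrank ℝ B) =
      Module.finrank ℝ ↥(A ⊓ B) + n := by
  have h1 : Aᗮ ⊓ Bᗮ = (A ⊔ B)ᗮ := Submodule.inf_orthogonal A B
  have h2 : Module.finrank ℝ ↥(A ⊔ B) + Module.finrank ℝ ↥((A ⊔ B)ᗮ) = n := by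
    have := Submodule.finrank_add_finrank_orthogonal (A ⊔ B)
    simpa using this
  have h3 := Submodule.finrank_sup_add_finrank_inf_eq A B
  rw [h1]
  omega

theorem one_dir {n : ℕ} (A : Submodule ℝ (EuclideanSpace ℝ (Fin n))) (d e j : ℕ)
    (hA : Module.finrank ℝ A = d) (hd : d ≤ n) (he : e ≤ n)
    (h : IsIrrational A e j) : IsIrrational Aᗮ (n - e) j := by
  intro B' hB' hB'rank
  set B := B'ᗮ with hBdef
  have hBB' : Bᗮ = B' := Submodule.orthogonal_orthogonal B'
  have horthB : Module.finrank ℝ B' + Module.finrank ℝ B = n := by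
    have := Submodule.finrank_add_finrank_orthogonal B'
    simpa using this
  have hBrank : Module.finrank ℝ B = e := by omega
  have hBrat : IsRationalSubspace B := isRat_orth B' hB'
  have h1 := h B hBrat hBrank
  have horthA : Module.finrank ℝ A + Module.finrank ℝ Aᗮ = n := by
    have := Submodule.finrank_add_finrank_orthogonal A
    simpa using this
  have h2 := dim_eq A B
  rw [hBB'] at h2
  have hAB : Module.finrank ℝ ↥(A ⊓ B) ≤ Module.finrank ℝ A := by
    exact Submodule.finrank_mono inf_le_left
  omega

end OrthIrrAux

/-- A subspace `A` of `ℝ^n` of dimension `d ∈ [1, n-1]` is `(e, j)`-irrational if and only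
if its orthogonal complement `Aᗮ` is `(n-e, j)`-irrational, for `e ∈ [1, n-1]` and
`j ∈ [1, min d e - max 0 (d + e - n)]`. -/
theorem orthogonal_irrational_iff (n : ℕ) (hn : 2 ≤ n)
    (A : Submodule ℝ (EuclideanSpace ℝ (Fin n))) (d e j : ℕ)
    (hA : Module.finrank ℝ A = d) (hd1 : 1 ≤ d) (hd2 : d ≤ n - 1)
    (he1 : 1 ≤ e) (he2 : e ≤ n - 1)
    (hj1 : 1 ≤ j) (hj2 : j ≤ min d e - (d + e - n)) :
    IsIrrational A e j ↔ IsIrrational Aᗮ (n - e) j := by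
  have hdn : d ≤ n := by omega
  have hen : e ≤ n := by omega
  have horthA : Module.finrank ℝ A + Module.finrank ℝ Aᗮ = n := by
    have := Submodule.finrank_add_finrank_orthogonal A
    simpa using this
  constructor
  · exact OrthIrrAux.one_dir A d e j hA hdn hen
  · intro h
    have hA' : Module.finrank ℝ Aᗮ = n - d := by omega
    have h2 := OrthIrrAux.one_dir Aᗮ (n - d) (n - e) j hA' (by omega) (by omega) h
    rw [Submodule.orthogonal_orthogonal A] at h2
    have : n - (n - e) = e := by omega
    rwa [this] at h2
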